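/- Let g and h be Leibniz algebras and let l : g → gl(h), r : g → gl(h), ω : g⊗g → h be linear maps. The bracket on g ⊕ h defined by [x+α, y+β] = [x,y]_g + ω(x,y) + l_x β + r_y α + [α,β]_h satisfies the Leibniz identity if and only if the following hold for all x,y,z ∈ g and α,β ∈ h: (1) l_x is a left derivation of h; (2) r_x is a right derivation of h; (3) [l_x α + r_x α, β]_h = 0; (4) [l_x,l_y] − l_{[x,y]_g} = ad^L_{ω(x,y)}; (5) [l_x,r_y] − r_{[x,y]_g} = ad^R_{ω(x,y)}; (6) r_y(r_x α + l_x α) = 0; (7) l_x ω(y,z) − l_y ω(x,z) − r_z ω(x,y) = ω([x,y]_g, z) − ω(x,[y,z]_g) + ω(y,[x,z]_g). -/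
import Mathlib


variable {K : Type*} [Field K]
  {g : Type*} [AddCommGroup g] [Module K g]
  {h : Type*} [AddCommGroup h] [Module K h]

/-- The extension bracket on `g ⊕ h` determined by `(l, r, ω)`:
`[x+α, y+β] = [x,y]_g + ω(x,y) + l_x β + r_y α + [α,β]_h`. -/
def extBracket (Bg : g →ₗ[K] g →ₗ[K] g) (Bh : h →ₗ[K] h →ₗ[K] h)
    (l r : g →ₗ[K] Module.End K h) (ω : g →ₗ[K] g →ₗ[K] h)
    (u v : g × h) : g × h :=
  (Bg u.1 v.1, ω u.1 v.1 + l u.1 v.2 + r v.1 u.2 + Bh u.2 v.2)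

/-- Proposition 2.6: the bracket `[·,·]_{(l,r,ω)}` on `g ⊕ h` satisfies the
Leibniz identity if and only if the seven conditions (2.9)–(2.15) hold. -/
theorem extension_bracket_leibniz_iff
    (Bg : g →ₗ[K] g →ₗ[K] g)
    (hg : ∀ x y z : g, Bg x (Bg y z) = Bg (Bg x y) z + Bg y (Bg x z))
    (Bh : h →ₗ[K] h →ₗ[K] h)
    (hh : ∀ a b c : h, Bh a (Bh b c) = Bh (Bh a b) c + Bh b (Bh a c))
    (l r : g →ₗ[K] Module.End K h) (ω : g →ₗ[K] g →ₗ[K] h) :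
    (∀ u v w : g × h,
        extBracket Bg Bh l r ω u (extBracket Bg Bh l r ω v w) =
          extBracket Bg Bh l r ω (extBracket Bg Bh l r ω u v) w +
            extBracket Bg Bh l r ω v (extBracket Bg Bh l r ω u w))
    ↔
    ((∀ (x : g) (α β : h), l x (Bh α β) = Bh (l x α) β + Bh α (l x β)) ∧
     (∀ (x : g) (α β : h), r x (Bh α β) = Bh α (r x β) - Bh β (r x α)) ∧
     (∀ (x : g) (α β : h), Bh (l x α + r x α) β = 0) ∧
     (∀ (x y : g) (α : h),
        l x (l y α) - l y (l x α) - l (Bg x y) α = Bh (ω x y) α) ∧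
     (∀ (x y : g) (α : h),
        l x (r y α) - r y (l x α) - r (Bg x y) α = Bh α (ω x y)) ∧
     (∀ (x y : g) (α : h), r y (r x α + l x α) = 0) ∧
     (∀ x y z : g,
        l x (ω y z) - l y (ω x z) - r z (ω x y) =
          ω (Bg x y) z - ω x (Bg y z) + ω y (Bg x z))) := by
  constructor
  · intro H
    have c1 : ∀ (x : g) (α β : h), l x (Bh α β) = Bh (l x α) β + Bh α (l x β) := by
      intro x α β
      have e := congrArg Prod.snd (H (x,0) (0,α) (0,β))
      simp [extBracket] at e
      exact e
    have c2 : ∀ (x : g) (α β : h), r x (Bh α β) = Bh α (r x β) - Bh β (r x α) := by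
      intro x α β
      have e := congrArg Prod.snd (H (0,α) (0,β) (x,0))
      simp [extBracket] at e
      linear_combination (norm := abel) -e
    have c5 : ∀ (x y : g) (α : h),
        l x (r y α) - r y (l x α) - r (Bg x y) α = Bh α (ω x y) := by
      intro x y α
      have e := congrArg Prod.snd (H (x,0) (0,α) (y,0))
      simp [extBracket] at e
      linear_combination (norm := abel) e
    have c3 : ∀ (x : g) (α β : h), Bh (l x α + r x α) β = 0 := by
      intro x α β
      have e := congrArg Prod.snd (H (0,α) (x,0) (0,β))
      simp [extBracket] at e
      rw [map_add, LinearMap.add_apply]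
      linear_combination (norm := abel) -e - c1 x α β
    have c6 : ∀ (x y : g) (α : h), r y (r x α + l x α) = 0 := by
      intro x y α
      have e := congrArg Prod.snd (H (0,α) (x,0) (y,0))
      simp [extBracket] at e
      rw [map_add]
      linear_combination (norm := abel) -e - c5 x y α
    refine ⟨c1, c2, c3, ?_, c5, c6, ?_⟩
    · intro x y α
      have e := congrArg Prod.snd (H (x,0) (y,0) (0,α))
      simp [extBracket] at e
      linear_combination (norm := abel) e
    · intro x y z
      have e := congrArg Prod.snd (H (x,0) (y,0) (z,0))
      simp [extBracket] at e
      linear_combination (norm := abel) e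
  · rintro ⟨c1, c2, c3, c4, c5, c6, c7⟩
    have c3' : ∀ (x : g) (α β : h), Bh (l x α) β + Bh (r x α) β = 0 := by
      intro x α β
      have := c3 x α β
      rwa [map_add, LinearMap.add_apply] at this
    have c6' : ∀ (x y : g) (α : h), r y (r x α) + r y (l x α) = 0 := by
      intro x y α
      have := c6 x y α
      rwa [map_add] at this
    rintro ⟨x, α⟩ ⟨y, β⟩ ⟨z, γ⟩
    simp only [extBracket, Prod.mk_add_mk, Prod.mk.injEq, map_add, LinearMap.add_apply]
    refine ⟨hg x y z, ?_⟩
    linear_combination (norm := abel) c7 x y z + c4 x y γ + c5 x z β - c5 y z α -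
      c6' y z α + c1 x β γ - c1 y α γ - c3' y α γ - c2 z α β + hh α β γ
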